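/- Let n ≥ 1, let Ω ⊆ ℝⁿ be an open bounded convex set, let x, y ∈ ∂Ω and z, w ∈ Ω satisfy ‖x − z‖ = dist(z, ∂Ω) and ‖y − w‖ = dist(w, ∂Ω). Then ‖z − w‖² ≤ ‖x − y‖² + (‖x − z‖ − ‖y − w‖)². In other words, the map sending a pair (boundary point, distance) to the corresponding nearest interior point is 1-Lipschitz with respect to the metric on ∂Ω × ℝ induced by the Euclidean norm on ℝ^{n+1}. -/

import Mathlib

open Set Metric MeasureTheory RealInnerProductSpace

/-- For a point `z` of an open set `Ω` (in finite dimensions, `Ω ≠ univ`), the distance to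
the frontier equals the distance to the complement. -/
lemma infDist_frontier_eq_infDist_compl {n : ℕ} {Ω : Set (EuclideanSpace ℝ (Fin n))}
    (hopen : IsOpen Ω) (hne : Ω ≠ univ) {z : EuclideanSpace ℝ (Fin n)} (hz : z ∈ Ω) :
    infDist z (frontier Ω) = infDist z Ωᶜ := by
  obtain ⟨p, hp, hdp⟩ := exists_mem_frontier_infDist_compl_eq_dist hz hne
  apply le_antisymm
  · rw [hdp]; exact infDist_le_dist_of_mem hp
  · refine infDist_le_infDist_of_subset ?_ ⟨p, hp⟩
    rw [hopen.frontier_eq]; exact fun u hu => hu.2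

/-- Supporting hyperplane property at a nearest frontier point: if the ball of radius
`‖x - z‖` around `z` is contained in `Ω` and `x ∈ frontier Ω`, then for every `u` in the
closure of `Ω` we have `⟪u - x, z - x⟫ ≥ 0`. -/
lemma support_at_proximum {n : ℕ} {Ω : Set (EuclideanSpace ℝ (Fin n))}
    (hopen : IsOpen Ω) (hconv : Convex ℝ Ω) {x z : EuclideanSpace ℝ (Fin n)}
    (hx : x ∈ frontier Ω) (hball : ball z ‖x - z‖ ⊆ Ω) :
    ∀ u ∈ closure Ω, 0 ≤ ⟪u - x, z - x⟫ := by
  have hxΩ : x ∉ Ω := by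
    intro h
    have := hopen.inter_frontier_eq
    exact absurd (mem_inter h hx) (by rw [this]; exact notMem_empty x)
  have hsub : ∀ u ∈ Ω, 0 ≤ ⟪u - x, z - x⟫ := by
    intro u hu
    by_contra h
    push_neg at h
    set c : ℝ := ⟪u - x, z - x⟫ with hc
    have hux : u ≠ x := fun h' => hxΩ (h' ▸ hu)
    have hN : (0:ℝ) < ‖x - u‖ ^ 2 :=
      pow_pos (norm_sub_pos_iff.mpr (Ne.symm hux)) 2
    set N : ℝ := ‖x - u‖ ^ 2 with hNdef
    set μ : ℝ := -c / N with hμ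
    have hμpos : 0 < μ := div_pos (neg_pos.mpr h) hN
    have hμN : μ * N = -c := by rw [hμ]; field_simp
    set q : EuclideanSpace ℝ (Fin n) := x + μ • (x - u) with hq
    have hqz : ‖q - z‖ ^ 2 = ‖x - z‖ ^ 2 + 2 * μ * c + μ ^ 2 * N := by
      have hqe : q - z = (x - z) + μ • (x - u) := by rw [hq]; abel
      have hcc : ⟪x - z, x - u⟫ = c := by
        rw [hc, show x - z = -(z - x) from by abel, show x - u = -(u - x) from by abel,
          inner_neg_neg, real_inner_comm]
      rw [hqe, @norm_add_sq_real, real_inner_smul_right, norm_smul, hcc,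
        Real.norm_eq_abs, mul_pow, sq_abs, ← hNdef]
      ring
    have hqball : q ∈ ball z ‖x - z‖ := by
      rw [mem_ball, dist_eq_norm]
      have hterm : μ ^ 2 * N = -(μ * c) := by
        rw [pow_two, mul_assoc, hμN]; ring
      have hμc : μ * c < 0 := mul_neg_of_pos_of_neg hμpos h
      have h2 : ‖q - z‖ ^ 2 < ‖x - z‖ ^ 2 := by
        rw [hqz, hterm]; linarith
      nlinarith [norm_nonneg (q - z), norm_nonneg (x - z)]
    have hqΩ : q ∈ Ω := hball hqball
    -- x is a convex combination of u and q
    set t : ℝ := μ / (1 + μ) with ht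
    have h1μ : (0:ℝ) < 1 + μ := by linarith
    have ht0 : 0 < t := div_pos hμpos h1μ
    have ht1 : t < 1 := (div_lt_one h1μ).mpr (by linarith)
    have hs1 : t - (1 - t) * μ = 0 := by rw [ht]; field_simp; ring
    have hs2 : (1 - t) + (1 - t) * μ = 1 := by rw [ht]; field_simp; ring
    have hxcomb : t • u + (1 - t) • q = x := by
      have hexp : t • u + (1 - t) • q
          = (t - (1 - t) * μ) • u + ((1 - t) + (1 - t) * μ) • x := by
        rw [hq]; module
      rw [hexp, hs1, hs2]; simp
    have : x ∈ Ω := by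
      rw [← hxcomb]
      exact hconv hu hqΩ ht0.le (by linarith) (by ring)
    exact hxΩ this
  intro u hu
  have hclosed : IsClosed {u : EuclideanSpace ℝ (Fin n) | 0 ≤ ⟪u - x, z - x⟫} := by
    apply isClosed_le continuous_const
    exact (Continuous.sub continuous_id continuous_const).inner continuous_const
  exact closure_minimal (fun v hv => hsub v hv) hclosed hu

/-- The map sending a pair (boundary point, distance) to the corresponding nearest interior
point is 1-Lipschitz: if `x, y ∈ ∂Ω` realize the boundary distances of `z, w ∈ Ω`
respectively, then `‖z - w‖² ≤ ‖x - y‖² + (‖x - z‖ - ‖y - w‖)²`. -/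
theorem proximum_lipschitz (n : ℕ) (hn : 1 ≤ n)
    (Ω : Set (EuclideanSpace ℝ (Fin n)))
    (hopen : IsOpen Ω) (hbdd : Bornology.IsBounded Ω) (hconv : Convex ℝ Ω)
    (x y z w : EuclideanSpace ℝ (Fin n))
    (hx : x ∈ frontier Ω) (hy : y ∈ frontier Ω) (hz : z ∈ Ω) (hw : w ∈ Ω)
    (hxz : ‖x - z‖ = infDist z (frontier Ω))
    (hyw : ‖y - w‖ = infDist w (frontier Ω)) :
    ‖z - w‖ ^ 2 ≤ ‖x - y‖ ^ 2 + (‖x - z‖ - ‖y - w‖) ^ 2 := by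
  have hne : Ω ≠ univ := fun h => by
    rw [h] at hbdd
    obtain ⟨r, hr⟩ := hbdd.subset_ball 0
    have h1 : (EuclideanSpace.single (⟨0, hn⟩ : Fin n) (r+1) : EuclideanSpace ℝ (Fin n))
        ∈ ball (0 : EuclideanSpace ℝ (Fin n)) r := hr (mem_univ _)
    rw [mem_ball, dist_eq_norm, sub_zero, EuclideanSpace.norm_single] at h1
    have hr0 : (0:ℝ) < r := by
      simpa using hr (mem_univ (0 : EuclideanSpace ℝ (Fin n)))
    rw [Real.norm_eq_abs, abs_of_pos (by linarith)] at h1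
    linarith
  have hxz' : ‖x - z‖ = infDist z Ωᶜ := by
    rw [hxz, infDist_frontier_eq_infDist_compl hopen hne hz]
  have hyw' : ‖y - w‖ = infDist w Ωᶜ := by
    rw [hyw, infDist_frontier_eq_infDist_compl hopen hne hw]
  have hcompl_ne : Ωᶜ.Nonempty := nonempty_compl.mpr hne
  have hr : 0 < ‖x - z‖ := by
    rw [hxz']
    exact (hopen.isClosed_compl.notMem_iff_infDist_pos hcompl_ne).mp (by simpa using hz)
  have hs : 0 < ‖y - w‖ := by
    rw [hyw']
    exact (hopen.isClosed_compl.notMem_iff_infDist_pos hcompl_ne).mp (by simpa using hw)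
  set r : ℝ := ‖x - z‖ with hrdef
  set s : ℝ := ‖y - w‖ with hsdef
  have hballz : ball z r ⊆ Ω := by rw [hxz']; exact ball_infDist_compl_subset
  have hballw : ball w s ⊆ Ω := by rw [hyw']; exact ball_infDist_compl_subset
  -- supporting hyperplane at x and at y
  have hsx := support_at_proximum hopen hconv hx hballz
  have hsy := support_at_proximum hopen hconv hy hballw
  set a : EuclideanSpace ℝ (Fin n) := z - x with ha
  set b : EuclideanSpace ℝ (Fin n) := w - y with hb
  set d : EuclideanSpace ℝ (Fin n) := y - x with hd
  have hna : ‖a‖ = r := by rw [ha, norm_sub_rev]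
  have hnb : ‖b‖ = s := by rw [hb, norm_sub_rev]
  -- the point w - (s/r) • a lies in the closure of Ω
  have hu1 : w - (s / r) • a ∈ closure Ω := by
    have h1 : w - (s / r) • a ∈ closedBall w s := by
      rw [mem_closedBall, dist_eq_norm]
      have he : w - (s / r) • a - w = -((s / r) • a) := by abel
      rw [he, norm_neg, norm_smul, hna, Real.norm_eq_abs,
        abs_of_pos (div_pos hs hr), div_mul_cancel₀ _ (ne_of_gt hr)]
    have h2 : closedBall w s ⊆ closure Ω := by
      rw [← closure_ball w (ne_of_gt hs)]
      exact closure_mono hballw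
    exact h2 h1
  -- key inequality 1 : ⟪w - x, a⟫ ≥ r * s
  have key1 : r * s ≤ ⟪w - x, a⟫ := by
    have h0 := hsx _ hu1
    have hrw : w - (s / r) • a - x = (w - x) - (s / r) • a := by abel
    rw [hrw, inner_sub_left, real_inner_smul_left, real_inner_self_eq_norm_sq, hna] at h0
    have h1 : s / r * r ^ 2 ≤ ⟪w - x, a⟫ := by linarith
    calc r * s = s / r * r ^ 2 := by field_simp
    _ ≤ _ := h1
  -- key inequality 2 : ⟪d, b⟫ ≤ 0
  have key2 : ⟪d, b⟫ ≤ 0 := by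
    have h0 := hsy _ hx.1
    have hrw : x - y = -d := by rw [hd]; abel
    rw [hrw, inner_neg_left] at h0
    linarith
  -- now pure algebra
  have hzw : z - w = a - b - d := by rw [ha, hb, hd]; abel
  have hxy : ‖x - y‖ = ‖d‖ := by rw [hd, norm_sub_rev]
  have hwx : w - x = b + d := by rw [hb, hd]; abel
  rw [hwx, inner_add_left] at key1
  rw [hzw, hxy]
  have e1 : ‖a - b - d‖ ^ 2 = ‖a‖^2 + ‖b‖^2 + ‖d‖^2 - 2*⟪a,b⟫ - 2*⟪a,d⟫ + 2*⟪b,d⟫ := by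
    rw [show a - b - d = a - (b + d) by abel, @norm_sub_sq_real, @norm_add_sq_real,
      inner_add_right]
    ring
  rw [e1, hna, hnb]
  have hba : ⟪b, a⟫ = ⟪a, b⟫ := real_inner_comm a b
  have hda : ⟪d, a⟫ = ⟪a, d⟫ := real_inner_comm a d
  have hdb : ⟪d, b⟫ = ⟪b, d⟫ := real_inner_comm b d
  nlinarith [key1, key2]
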